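/- Assume in addition p ≡ 1 (mod 4) and q ≡ 3 (mod 4). Then there exists ε ∈ {1, −1} such that η_0²(δ_1^{(p)}δ_1^{(q)} + δ_0^{(p)}δ_0^{(q)}) + η_1²(δ_1^{(p)}δ_0^{(q)} + δ_0^{(p)}δ_1^{(q)}) = (1 − pq)/4 + ε·pq/2. -/

import Mathlib

open Finset AddChar

lemma prod_isUnit_iff {M N : Type*} [Monoid M] [Monoid N] {a : M} {b : N} :
    IsUnit (a, b) ↔ IsUnit a ∧ IsUnit b := by
  constructor
  · intro h
    exact ⟨h.map (MonoidHom.fst M N), h.map (MonoidHom.snd M N)⟩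
  · rintro ⟨⟨u, hu⟩, ⟨v, hv⟩⟩
    exact ⟨⟨(↑u, ↑v), (↑u⁻¹, ↑v⁻¹), by ext <;> simp, by ext <;> simp⟩, by simp [Prod.ext_iff, hu, hv]⟩

lemma aux1 {p : ℕ} (hpo : Odd p) : 2 * ((p-1)/2) = p - 1 := by
  have := Nat.odd_iff.mp hpo; omega

lemma g_not_square (p : ℕ) [Fact p.Prime] (hpo : Odd p) (g : ℕ)
    (hgp : IsPrimitiveRoot (g : ZMod p) (p - 1)) : ¬ IsSquare (g : ZMod p) := by
  have hp := Fact.out (p := p.Prime)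
  rintro ⟨h, hh⟩
  have hg0 : (g : ZMod p) ≠ 0 := by
    intro h0
    have h1 : (g : ZMod p) ^ (p-1) = 1 := hgp.pow_eq_one
    rw [h0] at h1
    have hne : p - 1 ≠ 0 := by have := hp.two_le; omega
    simp [zero_pow hne] at h1
  have hh0 : h ≠ 0 := by rintro rfl; rw [mul_zero] at hh; exact hg0 hh
  have hone : (g : ZMod p) ^ ((p-1)/2) = 1 := by
    rw [hh, ← pow_two, ← pow_mul, aux1 hpo]
    exact ZMod.pow_card_sub_one_eq_one hh0
  have hdvd := (hgp.pow_eq_one_iff_dvd _).mp hone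
  have hp2 : p ≠ 2 := by rintro rfl; exact (by decide : ¬ Odd 2) hpo
  have h3 : 3 ≤ p := by have := hp.two_le; omega
  have hle := Nat.le_of_dvd (by omega) hdvd
  omega

lemma sum_range_two_mul (m : ℕ) (f : ℕ → ℂ) :
    ∑ s ∈ Finset.range (2*m), f s
      = ∑ t ∈ Finset.range m, f (2*t) + ∑ t ∈ Finset.range m, f (2*t+1) := by
  induction m with
  | zero => simp
  | succ n ih =>
    have h2 : 2*(n+1) = (2*n)+1+1 := by ring
    rw [h2, Finset.sum_range_succ, Finset.sum_range_succ, ih, Finset.sum_range_succ,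
      Finset.sum_range_succ (fun t => f (2*t+1))]
    ring

lemma prime_sums (p : ℕ) (hp : p.Prime) (hpo : Odd p) (g : ℕ)
    (hgp : IsPrimitiveRoot (g : ZMod p) (p - 1))
    (ζ : ℂ) (hζ : ζ = Complex.exp (2 * Real.pi * Complex.I / p)) :
    ((∑ k ∈ (Finset.range ((p-1)/2)).image (fun t => g ^ (2*t+0) % p), ζ ^ k) +
      ∑ k ∈ (Finset.range ((p-1)/2)).image (fun t => g ^ (2*t+1) % p), ζ ^ k) = -1 ∧
    ((∑ k ∈ (Finset.range ((p-1)/2)).image (fun t => g ^ (2*t+0) % p), ζ ^ k) -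
      ∑ k ∈ (Finset.range ((p-1)/2)).image (fun t => g ^ (2*t+1) % p), ζ ^ k) ^ 2
      = ((ZMod.χ₄ (p : ZMod 4) : ℤ) : ℂ) * p := by
  haveI : Fact p.Prime := ⟨hp⟩
  haveI : NeZero p := ⟨hp.ne_zero⟩
  set m := (p-1)/2 with hmdef
  have hm : 2*m = p - 1 := aux1 hpo
  have hp2 : p ≠ 2 := by rintro rfl; exact (by decide : ¬ Odd 2) hpo
  have h3 : 3 ≤ p := by have := hp.two_le; omega
  have hprim : IsPrimitiveRoot ζ p := by rw [hζ]; exact Complex.isPrimitiveRoot_exp p hp.ne_zero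
  have hζp : ζ ^ p = 1 := hprim.pow_eq_one
  set ψ : AddChar (ZMod p) ℂ := AddChar.zmodChar p hζp with hψdef
  have hψprim : ψ.IsPrimitive := by
    apply AddChar.zmod_char_primitive_of_eq_one_only_at_zero
    intro a ha
    rw [hψdef, AddChar.zmodChar_apply] at ha
    have hdvd := (hprim.pow_eq_one_iff_dvd _).mp ha
    have hlt := ZMod.val_lt a
    have : a.val = 0 := by
      rcases Nat.eq_zero_or_pos a.val with h | h
      · exact h
      · exact absurd (Nat.le_of_dvd h hdvd) (by omega)
    exact (ZMod.val_eq_zero a).mp this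
  have hψne : ψ ≠ 1 := by
    intro h
    apply hprim.ne_one hp.one_lt
    have : ψ 1 = 1 := by rw [h]; rfl
    rw [hψdef, AddChar.zmodChar_apply, ZMod.val_one] at this
    simpa using this
  set χ : MulChar (ZMod p) ℂ := (quadraticChar (ZMod p)).ringHomComp (Int.castRingHom ℂ) with hχdef
  have hringchar : ringChar (ZMod p) ≠ 2 := by rw [ZMod.ringChar_zmod_n]; exact hp2
  have hχne : χ ≠ 1 :=
    (MulChar.ringHomComp_ne_one_iff Int.cast_injective).mpr
      (quadraticChar_ne_one hringchar)
  have hχquad := (quadraticChar_isQuadratic (ZMod p)).comp (Int.castRingHom ℂ)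
  have hGsq : gaussSum χ ψ ^ 2 = ((ZMod.χ₄ (p : ZMod 4) : ℤ) : ℂ) * p := by
    classical
    rw [gaussSum_sq hχne hχquad hψprim]
    congr 1
    · rw [hχdef, MulChar.ringHomComp_apply, quadraticChar_neg_one hringchar, ZMod.card]
      norm_num
    · rw [ZMod.card]
  -- injectivity of t ↦ g^(2t+i) % p
  have hinj : ∀ i ≤ 1, Set.InjOn (fun t => g ^ (2*t+i) % p) (Finset.range m) := by
    intro i hi t ht s hs h
    simp only [Finset.coe_range, Set.mem_Iio] at ht hs
    have hc : ((g : ZMod p))^(2*t+i) = ((g : ZMod p))^(2*s+i) := by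
      have := congrArg (fun n : ℕ => (n : ZMod p)) h
      simpa [ZMod.natCast_mod] using this
    have := hgp.pow_inj (by omega) (by omega) hc
    omega
  have hginj : Set.InjOn (fun s => (g : ZMod p)^s) (Finset.range (p-1)) := by
    intro t ht s hs h
    simp only [Finset.coe_range, Set.mem_Iio] at ht hs
    exact hgp.pow_inj ht hs h
  have hgne : ∀ s : ℕ, (g : ZMod p)^s ≠ 0 := by
    intro s
    exact ((hgp.isUnit (by omega)).pow s).ne_zero
  have himage : (Finset.range (p-1)).image (fun s => (g : ZMod p)^s) = Finset.univ.erase 0 := by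
    apply Finset.eq_of_subset_of_card_le
    · intro a ha
      simp only [Finset.mem_image] at ha
      obtain ⟨s, _, rfl⟩ := ha
      exact Finset.mem_erase.mpr ⟨hgne s, Finset.mem_univ _⟩
    · rw [Finset.card_erase_of_mem (Finset.mem_univ _), Finset.card_univ, ZMod.card,
        Finset.card_image_of_injOn hginj, Finset.card_range]
  have hsplit : ∀ f : ZMod p → ℂ, ∑ a : ZMod p, f a
      = f 0 + (∑ t ∈ Finset.range m, f ((g : ZMod p)^(2*t))
        + ∑ t ∈ Finset.range m, f ((g : ZMod p)^(2*t+1))) := by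
    intro f
    rw [← Finset.add_sum_erase _ f (Finset.mem_univ 0), ← himage,
      Finset.sum_image hginj, show p - 1 = 2*m from hm.symm, sum_range_two_mul]
  -- rewrite the image sums
  have hval : ∀ i ≤ 1, (∑ k ∈ (Finset.range m).image (fun t => g ^ (2*t+i) % p), ζ ^ k)
      = ∑ t ∈ Finset.range m, ψ ((g : ZMod p)^(2*t+i)) := by
    intro i hi
    rw [Finset.sum_image (hinj i hi)]
    apply Finset.sum_congr rfl
    intro t _
    rw [← Nat.cast_pow, hψdef, AddChar.zmodChar_apply']
    exact (pow_eq_pow_mod _ hζp).symm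
  constructor
  · have h0 := hsplit ψ
    rw [AddChar.sum_eq_zero_of_ne_one hψne, AddChar.map_zero_eq_one] at h0
    rw [hval 0 (by omega), hval 1 (by omega)]
    simp only [add_zero] at *
    linear_combination -h0
  · have hχg : χ (g : ZMod p) = -1 := by
      rw [hχdef, MulChar.ringHomComp_apply,
        quadraticChar_neg_one_iff_not_isSquare.mpr (g_not_square p hpo g hgp)]
      norm_num
    have h1 := hsplit (fun a => χ a * ψ a)
    have hgs : gaussSum χ ψ = ∑ a : ZMod p, χ a * ψ a := rfl
    rw [← hgs, MulChar.map_zero, zero_mul] at h1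
    have hχ0 : ∀ t ∈ Finset.range m, χ ((g:ZMod p)^(2*t)) * ψ ((g:ZMod p)^(2*t))
        = ψ ((g:ZMod p)^(2*t)) := by
      intro t _
      rw [map_pow, hχg, pow_mul, neg_one_sq, one_pow, one_mul]
    have hχ1 : ∀ t ∈ Finset.range m, χ ((g:ZMod p)^(2*t+1)) * ψ ((g:ZMod p)^(2*t+1))
        = -ψ ((g:ZMod p)^(2*t+1)) := by
      intro t _
      rw [map_pow, hχg, pow_add, pow_mul, neg_one_sq, one_pow, pow_one, one_mul, neg_one_mul]
    rw [Finset.sum_congr rfl hχ0, Finset.sum_congr rfl hχ1] at h1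
    rw [hval 0 (by omega), hval 1 (by omega)]
    simp only [add_zero] at *
    rw [Finset.sum_neg_distrib] at h1
    rw [show (∑ t ∈ Finset.range m, ψ ((g:ZMod p)^(2*t)))
        - ∑ t ∈ Finset.range m, ψ ((g:ZMod p)^(2*t+1)) = gaussSum χ ψ from by
      linear_combination -h1]
    exact hGsq

lemma primroot_pow_modEq {M : Type*} [CommMonoid M] {z : M} {n : ℕ} (h : IsPrimitiveRoot z n)
    (hn : 0 < n) {a b : ℕ} (hab : z ^ a = z ^ b) : a ≡ b [MOD n] := by
  have hu := h.isUnit_unit hn.ne'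
  have h2 : (h.isUnit hn.ne').unit ^ a = (h.isUnit hn.ne').unit ^ b := by
    apply Units.ext
    simpa using hab
  rw [pow_eq_pow_iff_modEq, ← hu.eq_orderOf] at h2
  exact h2

section Nlevel
theorem eta_delta_combination_core
    (p q : ℕ) (hp : p.Prime) (hq : q.Prime) (hpq : p ≠ q)
    (hpo : Odd p) (hqo : Odd q)
    (hgcd : Nat.gcd (p - 1) (q - 1) = 2)
    (hp4 : p % 4 = 1) (hq4 : q % 4 = 3)
    (g : ℕ)
    (hgp : IsPrimitiveRoot (g : ZMod p) (p - 1))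
    (hgq : IsPrimitiveRoot (g : ZMod q) (q - 1))
    (x : ℕ) (hxlt : x < p * q) (hxp : x % p = g % p) (hxq : x % q = 1)
    (e : ℕ) (he : e = (p - 1) * (q - 1) / 2)
    (ω : ℂ) (hω : ω = Complex.exp (2 * Real.pi * Complex.I / (p * q))) :
    ((∑ k ∈ (Finset.range e).image (fun s => g ^ s * x ^ 0 % (p * q)), ω ^ k) +
      ∑ k ∈ (Finset.range e).image (fun s => g ^ s * x ^ 1 % (p * q)), ω ^ k) = 1 ∧
    ((∑ k ∈ (Finset.range e).image (fun s => g ^ s * x ^ 0 % (p * q)), ω ^ k) -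
      ∑ k ∈ (Finset.range e).image (fun s => g ^ s * x ^ 1 % (p * q)), ω ^ k) ^ 2
      = -((p : ℂ) * q) := by
  haveI : Fact p.Prime := ⟨hp⟩
  haveI : Fact q.Prime := ⟨hq⟩
  haveI : NeZero p := ⟨hp.ne_zero⟩
  haveI : NeZero q := ⟨hq.ne_zero⟩
  have hNne : p * q ≠ 0 := Nat.mul_ne_zero hp.ne_zero hq.ne_zero
  haveI : NeZero (p * q) := ⟨hNne⟩
  have hp2 : p ≠ 2 := by rintro rfl; omega
  have hq2 : q ≠ 2 := by rintro rfl; omega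
  have hp3 : 3 ≤ p := by have := hp.two_le; omega
  have hq3 : 3 ≤ q := by have := hq.two_le; omega
  have hpmod2 : p % 2 = 1 := Nat.odd_iff.mp hpo
  have hqmod2 : q % 2 = 1 := Nat.odd_iff.mp hqo
  have hcop : Nat.Coprime p q := (Nat.coprime_primes hp hq).mpr hpq
  have h2e : 2 * e = (p - 1) * (q - 1) := by
    rw [he]
    have h2 : 2 ∣ (p - 1) * (q - 1) := Dvd.dvd.mul_right (by omega) _
    exact Nat.mul_div_cancel' h2
  have hlcm : Nat.lcm (p - 1) (q - 1) = e := by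
    have := Nat.gcd_mul_lcm (p - 1) (q - 1)
    rw [hgcd] at this
    omega
  -- primitive root of unity
  have hωprim : IsPrimitiveRoot ω (p * q) := by
    rw [hω, show ((p : ℂ) * q) = ((p * q : ℕ) : ℂ) by push_cast; ring]
    exact Complex.isPrimitiveRoot_exp _ hNne
  have hωN : ω ^ (p * q) = 1 := hωprim.pow_eq_one
  set ψN : AddChar (ZMod (p * q)) ℂ := AddChar.zmodChar (p * q) hωN with hψNdef
  set crt := ZMod.chineseRemainder hcop with hcrtdef
  set c1 : ZMod (p * q) →+* ZMod p := (RingHom.fst _ _).comp crt.toRingHom with hc1def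
  set c2 : ZMod (p * q) →+* ZMod q := (RingHom.snd _ _).comp crt.toRingHom with hc2def
  set ψ1 : AddChar (ZMod p) ℂ :=
    ψN.compAddMonoidHom ((crt.symm.toAddMonoidHom).comp (AddMonoidHom.inl (ZMod p) (ZMod q)))
    with hψ1def
  set ψ2 : AddChar (ZMod q) ℂ :=
    ψN.compAddMonoidHom ((crt.symm.toAddMonoidHom).comp (AddMonoidHom.inr (ZMod p) (ZMod q)))
    with hψ2def
  have hdec : ∀ k, ψ1 (c1 k) * ψ2 (c2 k) = ψN k := by
    intro k
    have h1 : ψ1 (c1 k) * ψ2 (c2 k) = ψN (crt.symm ((c1 k, 0) + ((0 : ZMod p), c2 k))) := by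
      rw [map_add, ψN.map_add_eq_mul]
      rfl
    rw [h1]
    congr 1
    have h2 : ((c1 k, (0 : ZMod q)) + ((0 : ZMod p), c2 k)) = crt k := by
      ext <;> simp [hc1def, hc2def]
    rw [h2, RingEquiv.symm_apply_apply]
  have hfact : ∀ (f : ZMod p → ℂ) (h' : ZMod q → ℂ),
      ∑ k : ZMod (p * q), f (c1 k) * h' (c2 k) = (∑ u : ZMod p, f u) * ∑ v : ZMod q, h' v := by
    intro f h'
    calc ∑ k : ZMod (p*q), f (c1 k) * h' (c2 k)
        = ∑ uv : ZMod p × ZMod q, f uv.1 * h' uv.2 :=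
          Fintype.sum_equiv crt.toEquiv _ _ (fun k => rfl)
      _ = (∑ u : ZMod p, f u) * ∑ v : ZMod q, h' v := by
          rw [Fintype.sum_prod_type, ← Finset.sum_mul_sum]
  -- injectivity of ψN
  have hψNinj : Function.Injective ψN := by
    intro a b hab
    apply ZMod.val_injective
    refine hωprim.pow_inj (ZMod.val_lt a) (ZMod.val_lt b) ?_
    simpa [hψNdef, AddChar.zmodChar_apply] using hab
  have hψ1ne : ψ1 ≠ 1 := by
    intro h
    have h1 : ψ1 1 = ψ1 0 := by rw [h]; rfl
    have h2 : crt.symm ((1 : ZMod p), (0 : ZMod q)) = crt.symm (0, 0) := by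
      apply hψNinj
      rw [show ((0 : ZMod p), (0 : ZMod q)) = 0 from rfl, map_zero, AddChar.map_zero_eq_one]
      simpa [hψ1def] using h1
    have := crt.symm.injective h2
    simp only [Prod.mk.injEq] at this
    exact one_ne_zero this.1
  have hψ2ne : ψ2 ≠ 1 := by
    intro h
    have h1 : ψ2 1 = ψ2 0 := by rw [h]; rfl
    have h2 : crt.symm ((0 : ZMod p), (1 : ZMod q)) = crt.symm (0, 0) := by
      apply hψNinj
      rw [show ((0 : ZMod p), (0 : ZMod q)) = 0 from rfl, map_zero, AddChar.map_zero_eq_one]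
      simpa [hψ2def] using h1
    have := crt.symm.injective h2
    simp only [Prod.mk.injEq] at this
    exact one_ne_zero this.2
  -- casts of x
  have hxp' : (x : ZMod p) = (g : ZMod p) := by
    have := congrArg (fun n : ℕ => (n : ZMod p)) hxp
    simpa [ZMod.natCast_mod] using this
  have hxq' : (x : ZMod q) = 1 := by
    have := congrArg (fun n : ℕ => (n : ZMod q)) hxq
    simpa [ZMod.natCast_mod] using this
  -- the parametrization of units
  set zf : ℕ → ℕ → ZMod (p * q) := fun i s => (g : ZMod (p * q))^s * ((x : ZMod (p * q)))^i
    with hzfdef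
  have hzfcast : ∀ i s, zf i s = ((g ^ s * x ^ i : ℕ) : ZMod (p * q)) := by
    intro i s; rw [hzfdef]; push_cast; ring
  have hproj1 : ∀ i s, c1 (zf i s) = (g : ZMod p)^(s + i) := by
    intro i s
    rw [hzfcast, map_natCast, Nat.cast_mul, Nat.cast_pow, Nat.cast_pow, hxp', pow_add]
  have hproj2 : ∀ i s, c2 (zf i s) = (g : ZMod q)^s := by
    intro i s
    rw [hzfcast, map_natCast, Nat.cast_mul, Nat.cast_pow, Nat.cast_pow, hxq', one_pow, mul_one]
  have hmod : ∀ i s j t, zf i s = zf j t →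
      (s + i ≡ t + j [MOD p - 1]) ∧ (s ≡ t [MOD q - 1]) := by
    intro i s j t hst
    constructor
    · have h1 := congrArg c1 hst
      rw [hproj1, hproj1] at h1
      exact primroot_pow_modEq hgp (by omega) h1
    · have h2 := congrArg c2 hst
      rw [hproj2, hproj2] at h2
      exact primroot_pow_modEq hgq (by omega) h2
  have hmodE : ∀ s t, s ≡ t [MOD p - 1] → s ≡ t [MOD q - 1] → s ≡ t [MOD e] := by
    intro s t h1 h2
    rw [← hlcm]
    apply Nat.modEq_of_dvd
    rw [← Int.lcm_natCast_natCast]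
    exact Int.coe_lcm_dvd h1.dvd h2.dvd
  have zinj : ∀ i, Set.InjOn (zf i) (Finset.range e) := by
    intro i s hs t ht hst
    simp only [Finset.coe_range, Set.mem_Iio] at hs ht
    obtain ⟨h1, h2⟩ := hmod i s i t hst
    exact (hmodE s t (h1.add_right_cancel' i) h2).eq_of_lt_of_lt hs ht
  have zdisj : ∀ s t, zf 0 s ≠ zf 1 t := by
    intro s t hst
    obtain ⟨h1, h2⟩ := hmod 0 s 1 t hst
    have e1 : s % 2 = (t + 1) % 2 := (h1.of_dvd (by omega)).add_right_cancel' 0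
    have e2 : s % 2 = t % 2 := h2.of_dvd (by omega)
    omega
  -- units
  have hisunit : ∀ k : ZMod (p * q), IsUnit k ↔ (c1 k ≠ 0 ∧ c2 k ≠ 0) := by
    intro k
    constructor
    · intro h
      have h2 : IsUnit (crt k) := h.map crt.toRingHom.toMonoidHom
      have h3 : crt k = (c1 k, c2 k) := rfl
      rw [h3] at h2
      obtain ⟨hu, hv⟩ := prod_isUnit_iff.mp h2
      exact ⟨hu.ne_zero, hv.ne_zero⟩
    · rintro ⟨h1, h2⟩
      have h3 : IsUnit ((c1 k, c2 k) : ZMod p × ZMod q) :=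
        prod_isUnit_iff.mpr ⟨isUnit_iff_ne_zero.mpr h1, isUnit_iff_ne_zero.mpr h2⟩
      have h4 : IsUnit (crt.symm (c1 k, c2 k)) := h3.map crt.symm.toRingHom.toMonoidHom
      have h5 : crt.symm (c1 k, c2 k) = k := by
        have : ((c1 k, c2 k) : ZMod p × ZMod q) = crt k := rfl
        rw [this, RingEquiv.symm_apply_apply]
      rwa [h5] at h4
  have hgunit : ∀ i s, IsUnit (zf i s) := by
    intro i s
    rw [hisunit]
    constructor
    · rw [hproj1]
      exact (((hgp.isUnit (by omega)).pow _)).ne_zero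
    · rw [hproj2]
      exact (((hgq.isUnit (by omega)).pow _)).ne_zero
  set U : Finset (ZMod (p * q)) := Finset.univ.image (fun u : (ZMod (p * q))ˣ => (u : ZMod (p * q)))
    with hUdef
  have hUmem : ∀ k, k ∈ U ↔ IsUnit k := by
    intro k
    simp only [hUdef, Finset.mem_image, Finset.mem_univ, true_and]
    exact ⟨fun ⟨u, hu⟩ => ⟨u, hu⟩, fun ⟨u, hu⟩ => ⟨u, hu⟩⟩
  have hUcard : U.card = 2 * e := by
    rw [hUdef, Finset.card_image_of_injective _ Units.val_injective, Finset.card_univ,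
      ZMod.card_units_eq_totient, Nat.totient_mul hcop, Nat.totient_prime hp,
      Nat.totient_prime hq, h2e]
  set S0 : Finset (ZMod (p * q)) := (Finset.range e).image (zf 0) with hS0def
  set S1 : Finset (ZMod (p * q)) := (Finset.range e).image (zf 1) with hS1def
  have hdisj : Disjoint S0 S1 := by
    rw [Finset.disjoint_left]
    intro a ha hb
    rw [hS0def, Finset.mem_image] at ha
    rw [hS1def, Finset.mem_image] at hb
    obtain ⟨s, _, rfl⟩ := ha
    obtain ⟨t, _, hb⟩ := hb
    exact zdisj s t hb.symm
  have hUeq : S0 ∪ S1 = U := by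
    apply Finset.eq_of_subset_of_card_le
    · apply Finset.union_subset
      · intro a ha
        rw [hS0def, Finset.mem_image] at ha
        obtain ⟨s, _, rfl⟩ := ha
        exact (hUmem _).mpr (hgunit 0 s)
      · intro a ha
        rw [hS1def, Finset.mem_image] at ha
        obtain ⟨s, _, rfl⟩ := ha
        exact (hUmem _).mpr (hgunit 1 s)
    · rw [Finset.card_union_of_disjoint hdisj, hUcard, hS0def, hS1def,
        Finset.card_image_of_injOn (zinj 0), Finset.card_image_of_injOn (zinj 1),
        Finset.card_range]
      omega
  have hsplitN : ∀ F : ZMod (p * q) → ℂ, (∀ k, ¬ IsUnit k → F k = 0) →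
      ∑ k : ZMod (p * q), F k
        = ∑ s ∈ Finset.range e, F (zf 0 s) + ∑ s ∈ Finset.range e, F (zf 1 s) := by
    intro F hF0
    rw [← Finset.sum_image (zinj 0), ← Finset.sum_image (zinj 1), ← hS0def, ← hS1def,
      ← Finset.sum_union hdisj, hUeq]
    symm
    apply Finset.sum_subset (Finset.subset_univ _)
    intro k _ hk
    exact hF0 k (fun h => hk ((hUmem k).mpr h))
  -- multiplicative characters
  set χ1 : MulChar (ZMod p) ℂ := (quadraticChar (ZMod p)).ringHomComp (Int.castRingHom ℂ)
    with hχ1def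
  set χ2 : MulChar (ZMod q) ℂ := (quadraticChar (ZMod q)).ringHomComp (Int.castRingHom ℂ)
    with hχ2def
  have hrcp : ringChar (ZMod p) ≠ 2 := by rw [ZMod.ringChar_zmod_n]; exact hp2
  have hrcq : ringChar (ZMod q) ≠ 2 := by rw [ZMod.ringChar_zmod_n]; exact hq2
  have hχ1ne : χ1 ≠ 1 :=
    (MulChar.ringHomComp_ne_one_iff Int.cast_injective).mpr (quadraticChar_ne_one hrcp)
  have hχ2ne : χ2 ≠ 1 :=
    (MulChar.ringHomComp_ne_one_iff Int.cast_injective).mpr (quadraticChar_ne_one hrcq)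
  have hψ1prim : ψ1.IsPrimitive := AddChar.IsPrimitive.of_ne_one hψ1ne
  have hψ2prim : ψ2.IsPrimitive := AddChar.IsPrimitive.of_ne_one hψ2ne
  classical
  have hGp2 : (gaussSum χ1 ψ1) ^ 2 = (p : ℂ) := by
    rw [gaussSum_sq hχ1ne ((quadraticChar_isQuadratic (ZMod p)).comp _) hψ1prim,
      hχ1def, MulChar.ringHomComp_apply, quadraticChar_neg_one hrcp, ZMod.card,
      ZMod.χ₄_nat_one_mod_four hp4]
    norm_num
  have hGq2 : (gaussSum χ2 ψ2) ^ 2 = -(q : ℂ) := by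
    rw [gaussSum_sq hχ2ne ((quadraticChar_isQuadratic (ZMod q)).comp _) hψ2prim,
      hχ2def, MulChar.ringHomComp_apply, quadraticChar_neg_one hrcq, ZMod.card,
      ZMod.χ₄_nat_three_mod_four hq4]
    norm_num
  have hχ1g : χ1 (g : ZMod p) = -1 := by
    rw [hχ1def, MulChar.ringHomComp_apply,
      quadraticChar_neg_one_iff_not_isSquare.mpr (g_not_square p hpo g hgp)]
    norm_num
  have hχ2g : χ2 (g : ZMod q) = -1 := by
    rw [hχ2def, MulChar.ringHomComp_apply,
      quadraticChar_neg_one_iff_not_isSquare.mpr (g_not_square q hqo g hgq)]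
    norm_num
  have hψNzf : ∀ i s, ψN (zf i s) = ω ^ (g ^ s * x ^ i % (p * q)) := by
    intro i s
    rw [hzfcast, hψNdef, AddChar.zmodChar_apply']
    exact pow_eq_pow_mod _ hωN
  -- ℕ-level injectivity for the image sums
  have ninj : ∀ i, Set.InjOn (fun s => g ^ s * x ^ i % (p * q)) (Finset.range e) := by
    intro i s hs t ht hst
    have hst' : g ^ s * x ^ i % (p * q) = g ^ t * x ^ i % (p * q) := hst
    refine zinj i hs ht ?_
    rw [hzfcast, hzfcast, ← ZMod.natCast_mod (g ^ s * x ^ i) (p * q),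
      ← ZMod.natCast_mod (g ^ t * x ^ i) (p * q), hst']
  -- first conclusion : η₀ + η₁ = 1
  constructor
  · set F' : ZMod (p * q) → ℂ := fun k =>
      (if c1 k = 0 then 0 else ψ1 (c1 k)) * (if c2 k = 0 then 0 else ψ2 (c2 k)) with hF'def
    have hF'0 : ∀ k, ¬ IsUnit k → F' k = 0 := by
      intro k hk
      rw [hisunit] at hk
      rw [hF'def]
      by_cases h1 : c1 k = 0
      · simp [h1]
      · by_cases h2 : c2 k = 0
        · simp [h2]
        · exact absurd ⟨h1, h2⟩ hk
    have hF'unit : ∀ i s, F' (zf i s) = ω ^ (g ^ s * x ^ i % (p * q)) := by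
      intro i s
      obtain ⟨h1, h2⟩ := (hisunit _).mp (hgunit i s)
      rw [hF'def]
      simp only [if_neg h1, if_neg h2]
      rw [hdec, hψNzf]
    have hsum1 : ∀ (r : ℕ) (ψ' : AddChar (ZMod r) ℂ) (_ : NeZero r) (_ : ψ' ≠ 1),
        ∑ u : ZMod r, (if u = 0 then 0 else ψ' u) = -1 := by
      intro r ψ' hr hψ'
      have h := AddChar.sum_eq_zero_of_ne_one hψ'
      rw [← Finset.add_sum_erase _ ψ' (Finset.mem_univ 0), AddChar.map_zero_eq_one] at h
      rw [← Finset.add_sum_erase _ _ (Finset.mem_univ 0), if_pos rfl,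
        Finset.sum_congr rfl (fun u hu => if_neg (Finset.mem_erase.mp hu).1)]
      linear_combination h
    have hfact' := hfact (fun u => if u = 0 then 0 else ψ1 u) (fun v => if v = 0 then 0 else ψ2 v)
    rw [hsum1 p ψ1 ‹_› hψ1ne, hsum1 q ψ2 ‹_› hψ2ne] at hfact'
    have hsplit' := hsplitN F' hF'0
    rw [hfact'] at hsplit'
    rw [Finset.sum_image (ninj 0), Finset.sum_image (ninj 1)]
    rw [Finset.sum_congr rfl (fun s _ => (hF'unit 0 s).symm),
      Finset.sum_congr rfl (fun s _ => (hF'unit 1 s).symm)]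
    linear_combination -hsplit'
  -- second conclusion : (η₀ - η₁)² = -pq
  · set F : ZMod (p * q) → ℂ := fun k =>
      (χ1 (c1 k) * ψ1 (c1 k)) * (χ2 (c2 k) * ψ2 (c2 k)) with hFdef
    have hF0 : ∀ k, ¬ IsUnit k → F k = 0 := by
      intro k hk
      rw [hisunit] at hk
      show χ1 (c1 k) * ψ1 (c1 k) * (χ2 (c2 k) * ψ2 (c2 k)) = 0
      by_cases h1 : c1 k = 0
      · rw [h1, MulChar.map_zero]; ring
      · by_cases h2 : c2 k = 0
        · rw [h2, MulChar.map_zero]; ring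
        · exact absurd ⟨h1, h2⟩ hk
    have hFsum : ∑ k : ZMod (p * q), F k = gaussSum χ1 ψ1 * gaussSum χ2 ψ2 :=
      hfact (fun u => χ1 u * ψ1 u) (fun v => χ2 v * ψ2 v)
    have hFunit : ∀ i s, F (zf i s) = (-1 : ℂ) ^ i * ω ^ (g ^ s * x ^ i % (p * q)) := by
      intro i s
      have hv : F (zf i s) = (χ1 (c1 (zf i s)) * χ2 (c2 (zf i s)))
          * (ψ1 (c1 (zf i s)) * ψ2 (c2 (zf i s))) := by rw [hFdef]; ring
      rw [hv, hdec, hψNzf, hproj1, hproj2, map_pow, map_pow, hχ1g, hχ2g]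
      have : (-1 : ℂ) ^ (s + i) * (-1 : ℂ) ^ s = (-1 : ℂ) ^ i := by
        rw [pow_add, mul_comm ((-1:ℂ)^s), mul_assoc, ← pow_add, ← two_mul, pow_mul,
          neg_one_sq, one_pow, mul_one]
      rw [this]
    have hsplit2 := hsplitN F hF0
    rw [hFsum] at hsplit2
    rw [Finset.sum_image (ninj 0), Finset.sum_image (ninj 1)]
    have hd : (∑ s ∈ Finset.range e, ω ^ (g ^ s * x ^ 0 % (p * q)))
        - ∑ s ∈ Finset.range e, ω ^ (g ^ s * x ^ 1 % (p * q))
        = gaussSum χ1 ψ1 * gaussSum χ2 ψ2 := by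
      rw [hsplit2]
      rw [Finset.sum_congr rfl (fun s _ => hFunit 0 s),
        Finset.sum_congr rfl (fun s _ => hFunit 1 s)]
      simp only [pow_zero, pow_one, one_mul, neg_one_mul, Finset.sum_neg_distrib]
      ring
    rw [hd, mul_pow, hGp2, hGq2]
    ring
end Nlevel




/-- For `p ≡ 1 (mod 4)` and `q ≡ 3 (mod 4)`, there exists `ε ∈ {1, -1}` such that
`η₀²(δ₁⁽ᵖ⁾δ₁⁽ᑫ⁾ + δ₀⁽ᵖ⁾δ₀⁽ᑫ⁾) + η₁²(δ₁⁽ᵖ⁾δ₀⁽ᑫ⁾ + δ₀⁽ᵖ⁾δ₁⁽ᑫ⁾) = (1 - pq)/4 + ε·pq/2`. -/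
theorem eta_delta_combination
    (p q : ℕ) (hp : p.Prime) (hq : q.Prime) (hpq : p ≠ q)
    (hpo : Odd p) (hqo : Odd q)
    (hgcd : Nat.gcd (p - 1) (q - 1) = 2)
    (hp4 : p % 4 = 1) (hq4 : q % 4 = 3)
    (g : ℕ)
    (hgp : IsPrimitiveRoot (g : ZMod p) (p - 1))
    (hgq : IsPrimitiveRoot (g : ZMod q) (q - 1))
    (x : ℕ) (hxlt : x < p * q) (hxp : x % p = g % p) (hxq : x % q = 1)
    (e : ℕ) (he : e = (p - 1) * (q - 1) / 2)
    (D : ℕ → Finset ℕ)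
    (hD : ∀ i, D i = (Finset.range e).image (fun s => g ^ s * x ^ i % (p * q)))
    (ω : ℂ) (hω : ω = Complex.exp (2 * Real.pi * Complex.I / (p * q)))
    (η : ℕ → ℂ) (hη : ∀ i, η i = ∑ k ∈ D i, ω ^ k)
    (Dp : ℕ → Finset ℕ)
    (hDp : ∀ i, Dp i = (Finset.range ((p - 1) / 2)).image (fun t => g ^ (2 * t + i) % p))
    (Dq : ℕ → Finset ℕ)
    (hDq : ∀ i, Dq i = (Finset.range ((q - 1) / 2)).image (fun t => g ^ (2 * t + i) % q))
    (ωp : ℂ) (hωp : ωp = Complex.exp (2 * Real.pi * Complex.I / p))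
    (ωq : ℂ) (hωq : ωq = Complex.exp (2 * Real.pi * Complex.I / q))
    (δp : ℕ → ℂ) (hδp : ∀ i, δp i = ∑ k ∈ Dp i, ωp ^ k)
    (δq : ℕ → ℂ) (hδq : ∀ i, δq i = ∑ k ∈ Dq i, ωq ^ k) :
    ∃ ε : ℂ, (ε = 1 ∨ ε = -1) ∧
      η 0 ^ 2 * (δp 1 * δq 1 + δp 0 * δq 0) + η 1 ^ 2 * (δp 1 * δq 0 + δp 0 * δq 1) =
        (1 - (p : ℂ) * q) / 4 + ε * ((p : ℂ) * q) / 2 := by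
  obtain ⟨hps1, hps2⟩ := prime_sums p hp hpo g hgp ωp hωp
  obtain ⟨hqs1, hqs2⟩ := prime_sums q hq hqo g hgq ωq hωq
  rw [ZMod.χ₄_nat_one_mod_four hp4, Int.cast_one, one_mul] at hps2
  rw [ZMod.χ₄_nat_three_mod_four hq4, Int.cast_neg, Int.cast_one, neg_one_mul] at hqs2
  obtain ⟨hS, hd2⟩ := eta_delta_combination_core p q hp hq hpq hpo hqo hgcd hp4 hq4 g hgp hgq
    x hxlt hxp hxq e he ω hω
  rw [← hD 0, ← hD 1, ← hη 0, ← hη 1] at hS hd2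
  rw [← hDp 0, ← hDp 1, ← hδp 0, ← hδp 1] at hps1 hps2
  rw [← hDq 0, ← hDq 1, ← hδq 0, ← hδq 1] at hqs1 hqs2
  set A : ℂ := δp 1 * δq 1 + δp 0 * δq 0 with hAdef
  set B : ℂ := δp 1 * δq 0 + δp 0 * δq 1 with hBdef
  have hpq0 : ((p : ℂ) * q) ≠ 0 := by
    have h1 : (p : ℂ) ≠ 0 := Nat.cast_ne_zero.mpr hp.ne_zero
    have h2 : (q : ℂ) ≠ 0 := Nat.cast_ne_zero.mpr hq.ne_zero
    exact mul_ne_zero h1 h2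
  have hAB : A + B = 1 := by
    rw [hAdef, hBdef]
    linear_combination (δq 0 + δq 1) * hps1 - hqs1
  have hABd : (A - B) ^ 2 = -((p : ℂ) * q) := by
    rw [hAdef, hBdef]
    linear_combination (δq 0 - δq 1) ^ 2 * hps2 + (p : ℂ) * hqs2
  set ε : ℂ := (η 0 - η 1) * (A - B) / ((p : ℂ) * q) with hεdef
  have hεpq : ε * ((p : ℂ) * q) = (η 0 - η 1) * (A - B) := by
    rw [hεdef]; exact div_mul_cancel₀ _ hpq0
  have hε2 : ε = 1 ∨ ε = -1 := by
    apply mul_self_eq_one_iff.mp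
    have h1 : ε ^ 2 * ((p : ℂ) * q) ^ 2 = (η 0 - η 1) ^ 2 * (A - B) ^ 2 := by
      linear_combination (ε * ((p : ℂ) * q) + (η 0 - η 1) * (A - B)) * hεpq
    rw [hd2, hABd] at h1
    have h2 : ε ^ 2 * ((p : ℂ) * q) ^ 2 = 1 * ((p : ℂ) * q) ^ 2 := by
      rw [h1]; ring
    have := mul_right_cancel₀ (pow_ne_zero 2 hpq0) h2
    rw [← sq]
    linear_combination this
  refine ⟨ε, hε2, ?_⟩
  linear_combination (-1/2 : ℂ) * hεpq
    + ((η 0 - η 1) * (A - B) / 2 + (η 0 + η 1 + 1) * (A + B) / 4) * hS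
    + ((A + B) / 4) * hd2 + ((1 - (p : ℂ) * q) / 4) * hAB
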